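/- In the group G = ⟨a, b, t | t⁻¹at = b, t⁻¹bt = aba⁻¹⟩, the subgroup ⟨a, b⟩ is properly contained in t⟨a,b⟩t⁻¹. -/

import Mathlib

/-- Generators: `0 = a`, `1 = b`, `2 = t`.  Relations of
`⟨a, b, t | t⁻¹at = b, t⁻¹bt = aba⁻¹⟩`. -/
def grels : Set (FreeGroup (Fin 3)) :=
  {(FreeGroup.of 2)⁻¹ * FreeGroup.of 0 * FreeGroup.of 2 * (FreeGroup.of 1)⁻¹,
   (FreeGroup.of 2)⁻¹ * FreeGroup.of 1 * FreeGroup.of 2 *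
     (FreeGroup.of 0 * FreeGroup.of 1 * (FreeGroup.of 0)⁻¹)⁻¹}

namespace Stmt14Aux

abbrev M := Matrix (Fin 2) (Fin 2) ℚ

def mA : M := !![-1, -2; 0, 1]
def mB : M := !![-1, -1; 0, 1]
def mT : M := !![-2, -5; 0, 4]
def mTi : M := !![-1/2, -5/8; 0, 1/4]

def uA : Mˣ := ⟨mA, mA, by norm_num [mA, Matrix.mul_fin_two, ← Matrix.one_fin_two],
  by norm_num [mA, Matrix.mul_fin_two, ← Matrix.one_fin_two]⟩
def uB : Mˣ := ⟨mB, mB, by norm_num [mB, Matrix.mul_fin_two, ← Matrix.one_fin_two],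
  by norm_num [mB, Matrix.mul_fin_two, ← Matrix.one_fin_two]⟩
def uT : Mˣ := ⟨mT, mTi, by norm_num [mT, mTi, Matrix.mul_fin_two, ← Matrix.one_fin_two],
  by norm_num [mT, mTi, Matrix.mul_fin_two, ← Matrix.one_fin_two]⟩

def gen : Fin 3 → Mˣ := ![uA, uB, uT]

lemma rels_sat : ∀ r ∈ grels, (FreeGroup.lift gen) r = 1 := by
  rintro r (rfl | rfl) <;>
  · rw [Units.ext_iff]
    simp only [map_mul, map_inv, FreeGroup.lift_apply_of, gen, Matrix.cons_val_zero,
      Matrix.cons_val_one, Matrix.head_cons, Units.val_mul, Units.val_inv_eq_inv_val,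
      Units.val_one, Matrix.cons_val_two, Matrix.tail_cons]
    simp only [uA, uB, uT, Units.inv_mk, Units.val_mk, mA, mB, mT, mTi]
    norm_num [Matrix.mul_fin_two, ← Matrix.one_fin_two]

/-- the homomorphism `G → GL₂(ℚ)` -/
def f : PresentedGroup grels →* Mˣ := PresentedGroup.toGroup rels_sat

/-- matrices with integer entries -/
def intMat (m : M) : Prop := ∀ i j, ∃ n : ℤ, m i j = (n : ℚ)

lemma intMat_mul {x y : M} (hx : intMat x) (hy : intMat y) : intMat (x * y) := by
  intro i j
  obtain ⟨p, hp⟩ := hx i 0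
  obtain ⟨q, hq⟩ := hx i 1
  obtain ⟨r, hr⟩ := hy 0 j
  obtain ⟨s, hs⟩ := hy 1 j
  exact ⟨p * r + q * s, by
    simp [Matrix.mul_apply, Fin.sum_univ_two, hp, hq, hr, hs]⟩

/-- units whose matrix and inverse matrix both have integer entries -/
def Qint : Subgroup Mˣ where
  carrier := {u | intMat u.val ∧ intMat (u⁻¹).val}
  one_mem' := by
    constructor <;>
    · intro i j
      refine ⟨if i = j then 1 else 0, ?_⟩
      by_cases h : i = j <;> simp [Matrix.one_apply, h]
  mul_mem' := by
    rintro x y ⟨hx, hx'⟩ ⟨hy, hy'⟩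
    exact ⟨by simpa using intMat_mul hx hy, by simpa using intMat_mul hy' hx'⟩
  inv_mem' := by
    rintro x ⟨hx, hx'⟩
    exact ⟨hx', by simpa using hx⟩

lemma uA_mem : uA ∈ Qint := by
  constructor <;>
  · intro i j
    fin_cases i <;> fin_cases j <;> simp [uA, mA]
    exacts [⟨-1, by norm_num⟩, ⟨-2, by norm_num⟩, ⟨0, by norm_num⟩, ⟨1, by norm_num⟩]

lemma uB_mem : uB ∈ Qint := by
  constructor <;>
  · intro i j
    fin_cases i <;> fin_cases j <;> simp [uB, mB]
    exacts [⟨-1, by norm_num⟩, ⟨-1, by norm_num⟩, ⟨0, by norm_num⟩, ⟨1, by norm_num⟩]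

lemma rel_eq_one (r : FreeGroup (Fin 3)) (hr : r ∈ grels) :
    (QuotientGroup.mk r : PresentedGroup grels) = 1 :=
  (QuotientGroup.eq_one_iff r).2 (Subgroup.subset_normalClosure hr)

lemma rel1 : (PresentedGroup.of 2 : PresentedGroup grels)⁻¹ * PresentedGroup.of 0 *
    PresentedGroup.of 2 * (PresentedGroup.of 1)⁻¹ = 1 := by
  have h := rel_eq_one _ (Set.mem_insert _ _)
  simp at h ⊢
  exact h

lemma rel2 : (PresentedGroup.of 2 : PresentedGroup grels)⁻¹ * PresentedGroup.of 1 *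
    PresentedGroup.of 2 * (PresentedGroup.of 0 * PresentedGroup.of 1 *
      (PresentedGroup.of 0)⁻¹)⁻¹ = 1 := by
  have h := rel_eq_one _ (Set.mem_insert_iff.2 (Or.inr rfl))
  simp at h ⊢
  exact h

lemma f_entry :
    ((f (PresentedGroup.of 2 * PresentedGroup.of 0 * (PresentedGroup.of 2)⁻¹) : Mˣ) : M) 0 1
      = -3/2 := by
  have h0 : f (PresentedGroup.of 0) = uA := PresentedGroup.toGroup.of rels_sat
  have h2 : f (PresentedGroup.of 2) = uT := PresentedGroup.toGroup.of rels_sat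
  simp only [map_mul, map_inv, h0, h2, Units.val_mul, Units.val_inv_eq_inv_val]
  simp only [uA, uT, Units.inv_mk, Units.val_mk, mA, mT, mTi]
  norm_num [Matrix.mul_fin_two]

end Stmt14Aux

open Stmt14Aux in
theorem stmt_14 :
    Subgroup.closure {(PresentedGroup.of 0 : PresentedGroup grels), PresentedGroup.of 1} <
      Subgroup.map (MulAut.conj (PresentedGroup.of 2 : PresentedGroup grels)).toMonoidHom
        (Subgroup.closure {PresentedGroup.of 0, PresentedGroup.of 1}) := by
  set a : PresentedGroup grels := PresentedGroup.of 0 with ha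
  set b : PresentedGroup grels := PresentedGroup.of 1 with hb
  set t : PresentedGroup grels := PresentedGroup.of 2 with ht
  have hr1 : t⁻¹ * a * t * b⁻¹ = 1 := rel1
  have hr2 : t⁻¹ * b * t * (a * b * a⁻¹)⁻¹ = 1 := rel2
  have haK : a ∈ Subgroup.closure {a, b} := Subgroup.subset_closure (Set.mem_insert _ _)
  have hbK : b ∈ Subgroup.closure {a, b} :=
    Subgroup.subset_closure (Set.mem_insert_iff.2 (Or.inr rfl))
  rw [SetLike.lt_iff_le_and_exists]
  constructor
  · rw [Subgroup.closure_le]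
    rintro x (rfl | rfl)
    · exact Subgroup.mem_map.2 ⟨b, hbK, by
        simp only [MulEquiv.coe_toMonoidHom, MulAut.conj_apply]
        have : t⁻¹ * a * t = b := by
          have := hr1; group at this ⊢
          calc t⁻¹ * a * t = (t⁻¹ * a * t * b⁻¹) * b := by group
          _ = b := by rw [hr1]; group
        calc t * b * t⁻¹ = t * (t⁻¹ * a * t) * t⁻¹ := by rw [this]
        _ = a := by group⟩
    · exact Subgroup.mem_map.2 ⟨a * b * a⁻¹,
        mul_mem (mul_mem haK hbK) (inv_mem haK), by
        simp only [MulEquiv.coe_toMonoidHom, MulAut.conj_apply]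
        have : t⁻¹ * b * t = a * b * a⁻¹ := by
          calc t⁻¹ * b * t = (t⁻¹ * b * t * (a * b * a⁻¹)⁻¹) * (a * b * a⁻¹) := by group
          _ = a * b * a⁻¹ := by rw [hr2]; group
        calc t * (a * b * a⁻¹) * t⁻¹ = t * (t⁻¹ * b * t) * t⁻¹ := by rw [this]
        _ = b := by group⟩
  · refine ⟨t * a * t⁻¹, Subgroup.mem_map.2 ⟨a, haK, by
      simp [MulAut.conj_apply]⟩, ?_⟩
    intro hmem
    have hle : Subgroup.closure {a, b} ≤ Qint.comap f := by
      rw [Subgroup.closure_le]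
      rintro x (rfl | rfl)
      · show f a ∈ Qint
        have h0 : f a = uA := PresentedGroup.toGroup.of rels_sat
        rw [h0]; exact uA_mem
      · show f b ∈ Qint
        have h1 : f b = uB := PresentedGroup.toGroup.of rels_sat
        rw [h1]; exact uB_mem
    have hQ : f (t * a * t⁻¹) ∈ Qint := hle hmem
    obtain ⟨n, hn⟩ := hQ.1 0 1
    rw [f_entry] at hn
    have hq : (2 * (n : ℚ)) = -3 := by linarith [hn.symm]
    have h2n : (2 * n : ℤ) = (-3 : ℤ) := by exact_mod_cast hq
    omega
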